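/- Fix s > 0 and set c₆ = 1/3 + (2/3)·√(s + 1/4) + 0.001, and assume c₆ < 1. Then there exists a constant C > 0 such that for every integer N ≥ 1, ∑_{n ≥ N} (2/3)^n · ∑_{r=1}^{⌊n/2⌋} C(n−r−1, r−1) · s^r ≤ C · N · c₆^N. -/
import Mathlib

/-- The total entropy–energy weight of dual lattice paths with `n` edges:
`(2/3)^n ∑_{r=1}^{⌊n/2⌋} C(n−r−1, r−1) s^r`. -/
noncomputable def pathWeight (s : ℝ) (n : ℕ) : ℝ :=
  (2 / 3 : ℝ) ^ n * ∑ r ∈ Finset.Icc 1 (n / 2), (Nat.choose (n - r - 1) (r - 1) : ℝ) * s ^ r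

private lemma choose_mul_pow_le {x : ℝ} (hx : 0 ≤ x) (m k : ℕ) :
    (Nat.choose m k : ℝ) * x ^ k ≤ (1 + x) ^ m := by
  rcases le_or_gt k m with h | h
  · calc (Nat.choose m k : ℝ) * x ^ k = x ^ k * 1 ^ (m - k) * Nat.choose m k := by ring
    _ ≤ ∑ i ∈ Finset.range (m + 1), x ^ i * 1 ^ (m - i) * Nat.choose m i :=
        Finset.single_le_sum (f := fun i => x ^ i * 1 ^ (m - i) * (Nat.choose m i : ℝ))
          (fun i _ => by positivity) (Finset.mem_range.mpr (by omega))
    _ = (x + 1) ^ m := (add_pow x 1 m).symm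
    _ = (1 + x) ^ m := by ring
  · simp [Nat.choose_eq_zero_of_lt h]
    positivity

private lemma pathWeight_nonneg {s : ℝ} (hs : 0 < s) (n : ℕ) : 0 ≤ pathWeight s n := by
  unfold pathWeight
  have : (0:ℝ) ≤ ∑ r ∈ Finset.Icc 1 (n / 2), (Nat.choose (n - r - 1) (r - 1) : ℝ) * s ^ r :=
    Finset.sum_nonneg fun r _ => by positivity
  positivity

/-- Exponential tail bound: `∑_{n ≥ N} (2/3)^n ∑_{r=1}^{⌊n/2⌋} C(n−r−1,r−1) s^r ≤ C N c₆^N`. -/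
theorem stmt_10 (s : ℝ) (hs : 0 < s)
    (hc₆ : 1 / 3 + 2 / 3 * Real.sqrt (s + 1 / 4) + 0.001 < 1) :
    ∃ C : ℝ, 0 < C ∧ ∀ N : ℕ, 1 ≤ N →
      (∑' k : ℕ, pathWeight s (N + k)) ≤
        C * N * (1 / 3 + 2 / 3 * Real.sqrt (s + 1 / 4) + 0.001) ^ N := by
  set u : ℝ := Real.sqrt (s + 1 / 4) with hu_def
  have hu_sq : u ^ 2 = s + 1 / 4 := Real.sq_sqrt (by linarith)
  have hu_half : 1 / 2 < u := by
    nlinarith [Real.sqrt_nonneg (s + 1 / 4)]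
  set φ : ℝ := 1 / 2 + u with hφ_def
  have hφ1 : 1 < φ := by simp [hφ_def]; linarith
  set x : ℝ := u - 1 / 2 with hx_def
  have hx0 : 0 ≤ x := by simp [hx_def]; linarith
  have hxφ : x * φ = s := by
    simp only [hx_def, hφ_def]; nlinarith
  have h1x : 1 + x = φ := by simp [hx_def, hφ_def]; ring
  set b : ℝ := 2 / 3 * φ with hb_def
  have hb0 : 0 < b := by positivity
  have hbc : b = 1 / 3 + 2 / 3 * u := by rw [hb_def, hφ_def]; ring
  have hb1 : b < 1 := by rw [hbc]; linarith
  -- termwise bound on pathWeight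
  have hPW : ∀ n : ℕ, pathWeight s n ≤ s * n * b ^ n := by
    intro n
    have hterm : ∀ r ∈ Finset.Icc 1 (n / 2),
        (Nat.choose (n - r - 1) (r - 1) : ℝ) * s ^ r ≤ s * φ ^ n := by
      intro r hr
      rw [Finset.mem_Icc] at hr
      have h2r : 2 * r ≤ n := by
        have := hr.2
        omega
      have hkey : (Nat.choose (n - r - 1) (r - 1) : ℝ) * x ^ (r - 1) ≤ φ ^ (n - r - 1) := by
        have := choose_mul_pow_le hx0 (n - r - 1) (r - 1)
        rwa [h1x] at this
      have hsr : s ^ r = s * (x ^ (r - 1) * φ ^ (r - 1)) := by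
        rw [← mul_pow, hxφ]
        rw [← pow_succ']
        congr 1
        omega
      rw [hsr]
      have hφ0 : (0:ℝ) < φ := by linarith
      calc (Nat.choose (n - r - 1) (r - 1) : ℝ) * (s * (x ^ (r - 1) * φ ^ (r - 1)))
          = s * ((Nat.choose (n - r - 1) (r - 1) : ℝ) * x ^ (r - 1)) * φ ^ (r - 1) := by ring
        _ ≤ s * φ ^ (n - r - 1) * φ ^ (r - 1) := by
            have h0 : (0:ℝ) ≤ φ ^ (r - 1) := by positivity
            exact mul_le_mul_of_nonneg_right (mul_le_mul_of_nonneg_left hkey hs.le) h0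
        _ = s * φ ^ ((n - r - 1) + (r - 1)) := by rw [mul_assoc, ← pow_add]
        _ ≤ s * φ ^ n := by
            have : (n - r - 1) + (r - 1) ≤ n := by omega
            exact mul_le_mul_of_nonneg_left (pow_le_pow_right₀ hφ1.le this) hs.le
    have hsum : (∑ r ∈ Finset.Icc 1 (n / 2), (Nat.choose (n - r - 1) (r - 1) : ℝ) * s ^ r)
        ≤ (n / 2 : ℕ) * (s * φ ^ n) := by
      have := Finset.sum_le_card_nsmul _ _ _ hterm
      simpa [Nat.card_Icc, nsmul_eq_mul] using this
    have hcard : ((n / 2 : ℕ) : ℝ) ≤ (n : ℝ) := by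
      exact_mod_cast Nat.div_le_self n 2
    unfold pathWeight
    have h23 : (0:ℝ) ≤ (2/3:ℝ) ^ n := by positivity
    have hφn : (0:ℝ) ≤ φ ^ n := by positivity
    calc (2 / 3 : ℝ) ^ n * ∑ r ∈ Finset.Icc 1 (n / 2), (Nat.choose (n - r - 1) (r - 1) : ℝ) * s ^ r
        ≤ (2 / 3 : ℝ) ^ n * ((n / 2 : ℕ) * (s * φ ^ n)) := by
          exact mul_le_mul_of_nonneg_left hsum h23
      _ ≤ (2 / 3 : ℝ) ^ n * ((n : ℝ) * (s * φ ^ n)) := by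
          apply mul_le_mul_of_nonneg_left _ h23
          apply mul_le_mul_of_nonneg_right hcard (by positivity)
      _ = s * n * b ^ n := by
          rw [hb_def, mul_pow]; ring
  -- summability
  have hbnorm : ‖b‖ < 1 := by rw [Real.norm_eq_abs, abs_of_pos hb0]; exact hb1
  have hgeom : Summable (fun n : ℕ => (n : ℝ) * b ^ n) := by
    simpa using summable_pow_mul_geometric_of_norm_lt_one 1 hbnorm
  set K : ℝ := ∑' n : ℕ, (n : ℝ) * b ^ n with hK_def
  have hK0 : 0 ≤ K := tsum_nonneg fun n => by positivity
  set C : ℝ := s * ((1 - b)⁻¹ + K) with hC_def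
  have hC0 : 0 < C := by
    apply mul_pos hs
    have : (0:ℝ) < (1 - b)⁻¹ := by
      apply inv_pos.mpr; linarith
    linarith
  refine ⟨C, hC0, fun N hN => ?_⟩
  have hgN : Summable (fun k : ℕ => s * ((N + k : ℕ) : ℝ) * b ^ (N + k)) := by
    have h1 : Summable (fun k : ℕ => ((N + k : ℕ) : ℝ) * b ^ (N + k)) := by
      have := hgeom.comp_injective (add_right_injective N)
      simpa [Function.comp_def, Nat.cast_add] using this
    simpa [mul_assoc] using h1.mul_left s
  have hfN : Summable (fun k : ℕ => pathWeight s (N + k)) := by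
    apply Summable.of_nonneg_of_le (fun k => pathWeight_nonneg hs _) (fun k => hPW (N + k)) hgN
  have hle : (∑' k : ℕ, pathWeight s (N + k)) ≤ ∑' k : ℕ, s * ((N + k : ℕ) : ℝ) * b ^ (N + k) :=
    Summable.tsum_le_tsum (fun k => hPW (N + k)) hfN hgN
  -- compute/bound the RHS tsum
  have hsummand : ∀ k : ℕ, s * ((N + k : ℕ) : ℝ) * b ^ (N + k)
      = s * (N : ℝ) * b ^ N * b ^ k + s * b ^ N * ((k : ℝ) * b ^ k) := by
    intro k
    push_cast
    rw [pow_add]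
    ring
  have hsum1 : Summable (fun k : ℕ => s * (N : ℝ) * b ^ N * b ^ k) :=
    (summable_geometric_of_lt_one hb0.le hb1).mul_left _
  have hsum2 : Summable (fun k : ℕ => s * b ^ N * ((k : ℝ) * b ^ k)) :=
    hgeom.mul_left _
  have htsum : (∑' k : ℕ, s * ((N + k : ℕ) : ℝ) * b ^ (N + k))
      = s * (N : ℝ) * b ^ N * (1 - b)⁻¹ + s * b ^ N * K := by
    calc (∑' k : ℕ, s * ((N + k : ℕ) : ℝ) * b ^ (N + k))
        = ∑' k : ℕ, (s * (N : ℝ) * b ^ N * b ^ k + s * b ^ N * ((k : ℝ) * b ^ k)) := by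
          exact tsum_congr hsummand
      _ = (∑' k : ℕ, s * (N : ℝ) * b ^ N * b ^ k) + ∑' k : ℕ, s * b ^ N * ((k : ℝ) * b ^ k) :=
          Summable.tsum_add hsum1 hsum2
      _ = s * (N : ℝ) * b ^ N * (1 - b)⁻¹ + s * b ^ N * K := by
          rw [tsum_mul_left, tsum_mul_left, tsum_geometric_of_lt_one hb0.le hb1, ← hK_def]
  have hN1 : (1:ℝ) ≤ (N : ℝ) := by exact_mod_cast hN
  have hbn : b ^ N ≤ (1 / 3 + 2 / 3 * u + 0.001) ^ N := by
    apply pow_le_pow_left₀ hb0.le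
    rw [hbc]; norm_num
  have hfinal : s * (N : ℝ) * b ^ N * (1 - b)⁻¹ + s * b ^ N * K ≤ C * N * (1 / 3 + 2 / 3 * u + 0.001) ^ N := by
    have hbN0 : (0:ℝ) ≤ b ^ N := by positivity
    have hinv0 : (0:ℝ) < (1 - b)⁻¹ := inv_pos.mpr (by linarith)
    calc s * (N : ℝ) * b ^ N * (1 - b)⁻¹ + s * b ^ N * K
        ≤ s * (N : ℝ) * b ^ N * (1 - b)⁻¹ + s * b ^ N * K * N := by
          have h0 : (0:ℝ) ≤ s * b ^ N * K := mul_nonneg (mul_nonneg hs.le hbN0) hK0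
          have := le_mul_of_one_le_right h0 hN1
          linarith
      _ = C * N * b ^ N := by rw [hC_def]; ring
      _ ≤ C * N * (1 / 3 + 2 / 3 * u + 0.001) ^ N := by
          apply mul_le_mul_of_nonneg_left hbn
          positivity
  calc (∑' k : ℕ, pathWeight s (N + k))
      ≤ s * (N : ℝ) * b ^ N * (1 - b)⁻¹ + s * b ^ N * K := htsum ▸ hle
    _ ≤ C * N * (1 / 3 + 2 / 3 * u + 0.001) ^ N := hfinal
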